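/- Let (X_t) be a discrete-time nonnegative adapted process on a filtered probability space and suppose there exist γ ∈ (0, 1) and C₁ > 0 such that 𝔼[X_{n+1} | ℱ_n] ≤ γ X_n + C₁ for all n. Define δ = min{n ∈ ℕ : X_n ≤ 2C₁/(1−γ)}. Then there exist α > 0 and c > 0, depending only on γ and C₁, such that 𝔼[e^{α δ}] ≤ c (1 + X_0). -/

import Mathlib

open MeasureTheory

/-- `e^{α m}` for an extended-natural time `m`, with value `∞` when `m = ∞`. -/
noncomputable def expTime (α : ℝ) : ℕ∞ → ENNReal
  | ⊤ => ⊤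
  | (n : ℕ) => ENNReal.ofReal (Real.exp (α * n))

lemma lt_sInf_iff_enat (S : Set ℕ∞) (n : ℕ) : (↑n < sInf S) ↔ ∀ b ∈ S, ↑n < b := by
  constructor
  · intro h b hb; exact h.trans_le (sInf_le hb)
  · intro h
    rw [← ENat.add_one_le_iff (by simp : (n : ℕ∞) ≠ ⊤)]
    exact le_sInf fun b hb => (ENat.add_one_le_iff (by simp : (n : ℕ∞) ≠ ⊤)).mpr (h b hb)

lemma expTime_le_one_add_tsum {α : ℝ} (hα : 0 < α) (d : ℕ∞) :
    expTime α d ≤ 1 + ∑' n : ℕ,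
      (if (n : ℕ∞) < d then
        ENNReal.ofReal (Real.exp (α * (n + 1)) - Real.exp (α * n)) else 0) := by
  have hg : ∀ n : ℕ, Real.exp (α * (n + 1)) - Real.exp (α * n)
      = Real.exp (α * n) * (Real.exp α - 1) := by
    intro n
    rw [show α * ((n : ℝ) + 1) = α * n + α by ring, Real.exp_add]
    ring
  have hgnn : ∀ n : ℕ, 0 ≤ Real.exp (α * (n + 1)) - Real.exp (α * n) := by
    intro n
    rw [hg]
    have h1 : 1 ≤ Real.exp α := Real.one_le_exp hα.le
    nlinarith [Real.exp_pos (α * n)]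
  cases d with
  | top =>
    have hterm : ∀ n : ℕ, ENNReal.ofReal (Real.exp α - 1) ≤
        (if (n : ℕ∞) < (⊤ : ℕ∞) then
          ENNReal.ofReal (Real.exp (α * (n + 1)) - Real.exp (α * n)) else 0) := by
      intro n
      rw [if_pos (by exact_mod_cast WithTop.coe_lt_top n)]
      apply ENNReal.ofReal_le_ofReal
      rw [hg]
      have h1 : 1 ≤ Real.exp (α * n) := Real.one_le_exp (by positivity)
      have h2 : 1 ≤ Real.exp α := Real.one_le_exp hα.le
      nlinarith
    have htop : (∑' n : ℕ, (if (n : ℕ∞) < (⊤ : ℕ∞) then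
        ENNReal.ofReal (Real.exp (α * (n + 1)) - Real.exp (α * n)) else 0)) = ⊤ := by
      refine top_le_iff.mp ?_
      calc (⊤ : ENNReal) = ∑' _ : ℕ, ENNReal.ofReal (Real.exp α - 1) :=
            (ENNReal.tsum_const_eq_top_of_ne_zero (by
              simp only [ne_eq, ENNReal.ofReal_eq_zero, not_le]
              linarith [Real.one_lt_exp_iff.mpr hα])).symm
        _ ≤ _ := ENNReal.tsum_le_tsum hterm
    rw [htop]
    exact le_top
  | coe d =>
    have hexp : expTime α (d : ℕ∞) = ENNReal.ofReal (Real.exp (α * d)) := rfl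
    rw [hexp]
    have htel : ∑ k ∈ Finset.range d, (Real.exp (α * (k + 1)) - Real.exp (α * k))
        = Real.exp (α * d) - 1 := by
      have := Finset.sum_range_sub (f := fun k : ℕ => Real.exp (α * k)) d
      simp only [Nat.cast_add, Nat.cast_one] at this ⊢
      rw [this]
      simp
    have h1 : ENNReal.ofReal (Real.exp (α * d))
        = 1 + ENNReal.ofReal (Real.exp (α * d) - 1) := by
      rw [← ENNReal.ofReal_one, ← ENNReal.ofReal_add zero_le_one]
      · ring_nf
      · have : 1 ≤ Real.exp (α * d) := Real.one_le_exp (by positivity)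
        linarith
    rw [h1]
    gcongr
    rw [← htel, ENNReal.ofReal_sum_of_nonneg (fun k _ => hgnn k)]
    calc ∑ k ∈ Finset.range d, ENNReal.ofReal (Real.exp (α * (k + 1)) - Real.exp (α * k))
        = ∑ k ∈ Finset.range d, (if (k : ℕ∞) < (d : ℕ∞) then
            ENNReal.ofReal (Real.exp (α * (k + 1)) - Real.exp (α * k)) else 0) := by
          refine Finset.sum_congr rfl fun k hk => ?_
          rw [if_pos (by exact_mod_cast Finset.mem_range.mp hk)]
      _ ≤ _ := ENNReal.sum_le_tsum _

/-- Lyapunov drift condition implies an exponential moment for the hitting time of the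
set `{x : x ≤ 2C₁/(1−γ)}`. -/
theorem exp_moment_hitting_time_of_drift
    {Ω : Type*} {m : MeasurableSpace Ω} (μ : Measure Ω) [IsProbabilityMeasure μ]
    (ℱ : Filtration ℕ m) (X : ℕ → Ω → ℝ)
    (hadapted : Adapted ℱ X) (hint : ∀ n, Integrable (X n) μ)
    (hnonneg : ∀ n ω, 0 ≤ X n ω)
    {γ C₁ : ℝ} (hγ : 0 < γ) (hγ1 : γ < 1) (hC₁ : 0 < C₁)
    (hdrift : ∀ n, ∀ᵐ ω ∂μ, (μ[X (n + 1)|ℱ n]) ω ≤ γ * X n ω + C₁) :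
    ∃ α > (0 : ℝ), ∃ c > (0 : ℝ),
      ∫⁻ ω, expTime α
          (sInf {k : ℕ∞ | ∃ n : ℕ, k = n ∧ X n ω ≤ 2 * C₁ / (1 - γ)}) ∂μ ≤
        ENNReal.ofReal (c * (1 + ∫ ω, X 0 ω ∂μ)) := by
  classical
  have h1γ : 0 < 1 - γ := by linarith
  set M : ℝ := 2 * C₁ / (1 - γ) with hM_def
  have hM_pos : 0 < M := by positivity
  have hMC : (1 - γ) / 2 * M = C₁ := by
    rw [hM_def]; field_simp
  set ρ : ℝ := (1 + γ) / 2 with hρ_def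
  have hρ0 : 0 < ρ := by rw [hρ_def]; linarith
  have hρ1 : ρ < 1 := by rw [hρ_def]; linarith
  set α : ℝ := Real.log ((1 + ρ) / (2 * ρ)) with hα_def
  have harg : 1 < (1 + ρ) / (2 * ρ) := by
    rw [lt_div_iff₀ (by linarith)]; linarith
  have hα_pos : 0 < α := Real.log_pos harg
  have hexpα : Real.exp α = (1 + ρ) / (2 * ρ) := Real.exp_log (by positivity)
  set r : ℝ := Real.exp α * ρ with hr_def
  have hr_eq : r = (1 + ρ) / 2 := by
    rw [hr_def, hexpα]; field_simp
  have hr0 : 0 ≤ r := by rw [hr_eq]; linarith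
  have hr1 : r < 1 := by rw [hr_eq]; linarith
  set E₀ : ℝ := ∫ ω, X 0 ω ∂μ with hE₀_def
  have hE₀0 : 0 ≤ E₀ := integral_nonneg (fun ω => hnonneg 0 ω)
  set A : ℕ → Set Ω := fun n => {ω | ∀ k ≤ n, M < X k ω} with hA_def
  have hA_meas : ∀ n, MeasurableSet[ℱ n] (A n) := by
    intro n
    have : A n = ⋂ k ∈ Set.Iic n, {ω | M < X k ω} := by
      ext ω; simp [hA_def]
    rw [this]
    exact MeasurableSet.biInter (Set.to_countable _) fun k hk =>
      ℱ.mono hk _ (measurableSet_lt measurable_const (hadapted k))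
  have hA_measm : ∀ n, MeasurableSet (A n) := fun n => ℱ.le n _ (hA_meas n)
  have hA_mono : ∀ n, A (n + 1) ⊆ A n := fun n ω h k hk => h k (hk.trans n.le_succ)
  -- key recursion
  have key : ∀ n, ∫ ω in A n, X n ω ∂μ ≤ ρ ^ n * E₀ := by
    intro n
    induction n with
    | zero =>
      simpa using setIntegral_le_integral (hint 0)
        (Filter.Eventually.of_forall (hnonneg 0))
    | succ n ih =>
      have h1 : ∫ ω in A (n + 1), X (n + 1) ω ∂μ ≤ ∫ ω in A n, X (n + 1) ω ∂μ :=
        setIntegral_mono_set (hint (n + 1)).integrableOn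
          (Filter.Eventually.of_forall (hnonneg (n + 1)))
          (HasSubset.Subset.eventuallyLE (hA_mono n))
      have h2 : ∫ ω in A n, X (n + 1) ω ∂μ = ∫ ω in A n, (μ[X (n + 1)|ℱ n]) ω ∂μ :=
        (setIntegral_condExp (ℱ.le n) (hint (n + 1)) (hA_meas n)).symm
      have hint2 : Integrable (fun ω => γ * X n ω + C₁) μ :=
        ((hint n).const_mul γ).add (integrable_const C₁)
      have h3 : ∫ ω in A n, (μ[X (n + 1)|ℱ n]) ω ∂μ
          ≤ ∫ ω in A n, (γ * X n ω + C₁) ∂μ := by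
        refine integral_mono_ae integrable_condExp.integrableOn hint2.integrableOn ?_
        exact ae_restrict_of_ae (hdrift n)
      have h4 : ∫ ω in A n, (γ * X n ω + C₁) ∂μ ≤ ∫ ω in A n, ρ * X n ω ∂μ := by
        refine setIntegral_mono_on hint2.integrableOn
          ((hint n).const_mul ρ).integrableOn (hA_measm n) ?_
        intro ω hω
        have hx : M ≤ X n ω := (hω n le_rfl).le
        have hmul : (1 - γ) / 2 * M ≤ (1 - γ) / 2 * X n ω :=
          mul_le_mul_of_nonneg_left hx (by linarith)
        rw [hMC] at hmul
        rw [hρ_def]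
        linarith
      have h5 : ∫ ω in A n, ρ * X n ω ∂μ = ρ * ∫ ω in A n, X n ω ∂μ :=
        integral_const_mul ρ _
      calc ∫ ω in A (n + 1), X (n + 1) ω ∂μ
          ≤ ρ * ∫ ω in A n, X n ω ∂μ := by
            rw [← h5]; exact h1.trans (h2.trans_le (h3.trans h4))
        _ ≤ ρ * (ρ ^ n * E₀) := mul_le_mul_of_nonneg_left ih hρ0.le
        _ = ρ ^ (n + 1) * E₀ := by ring
  have hμA : ∀ n, μ (A n) ≤ ENNReal.ofReal (ρ ^ n * E₀ / M) := by
    intro n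
    have hge : M * (μ (A n)).toReal ≤ ∫ ω in A n, X n ω ∂μ :=
      by have := setIntegral_ge_of_const_le_real (hA_measm n) (measure_ne_top μ _)
           (fun ω hω => (hω n le_rfl).le) (hint n).integrableOn
         rw [measureReal_def] at this; exact this
    have htr : (μ (A n)).toReal ≤ ρ ^ n * E₀ / M := by
      rw [le_div_iff₀ hM_pos]
      nlinarith [hge.trans (key n)]
    rw [← ENNReal.ofReal_toReal (measure_ne_top μ (A n))]
    exact ENNReal.ofReal_le_ofReal htr
  -- relate the hitting time to the sets A n
  have hD : ∀ (ω : Ω) (n : ℕ),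
      ((n : ℕ∞) < sInf {k : ℕ∞ | ∃ m : ℕ, k = m ∧ X m ω ≤ M}) ↔ ω ∈ A n := by
    intro ω n
    rw [lt_sInf_iff_enat]
    constructor
    · intro h k hk
      by_contra hle
      push_neg at hle
      have := h (k : ℕ∞) ⟨k, rfl, hle⟩
      exact absurd (Nat.cast_lt.mp this) (not_lt.mpr hk)
    · rintro h b ⟨j, rfl, hj⟩
      rw [Nat.cast_lt]
      by_contra hjn
      push_neg at hjn
      exact absurd hj (not_le.mpr (h j hjn))
  set c : ℝ := max 1 ((Real.exp α - 1) / (M * (1 - r))) with hc_def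
  refine ⟨α, hα_pos, c, lt_of_lt_of_le one_pos (le_max_left _ _), ?_⟩
  have hgnn : ∀ n : ℕ, 0 ≤ Real.exp (α * (n + 1)) - Real.exp (α * n) := by
    intro n
    have : α * n ≤ α * (n + 1) := by nlinarith
    linarith [Real.exp_le_exp.mpr this]
  have hexp1 : 1 ≤ Real.exp α := Real.one_le_exp hα_pos.le
  calc ∫⁻ ω, expTime α (sInf {k : ℕ∞ | ∃ n : ℕ, k = n ∧ X n ω ≤ M}) ∂μ
      ≤ ∫⁻ ω, (1 + ∑' n : ℕ, (A n).indicator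
          (fun _ => ENNReal.ofReal (Real.exp (α * (n + 1)) - Real.exp (α * n))) ω) ∂μ := by
        refine lintegral_mono fun ω => ?_
        refine (expTime_le_one_add_tsum hα_pos _).trans (le_of_eq ?_)
        congr 1
        refine tsum_congr fun n => ?_
        rw [Set.indicator_apply]
        by_cases h : ω ∈ A n
        · rw [if_pos ((hD ω n).mpr h), if_pos h]
        · rw [if_neg (fun hc => h ((hD ω n).mp hc)), if_neg h]
    _ = 1 + ∑' n : ℕ, ENNReal.ofReal (Real.exp (α * (n + 1)) - Real.exp (α * n)) * μ (A n) := by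
        rw [lintegral_add_left measurable_const, lintegral_one, measure_univ]
        congr 1
        rw [lintegral_tsum fun n =>
          ((measurable_const.indicator (hA_measm n)) : Measurable _).aemeasurable]
        exact tsum_congr fun n => lintegral_indicator_const (hA_measm n) _
    _ ≤ 1 + ∑' n : ℕ, ENNReal.ofReal ((Real.exp α - 1) * (E₀ / M) * r ^ n) := by
        gcongr with n
        calc ENNReal.ofReal (Real.exp (α * (n + 1)) - Real.exp (α * n)) * μ (A n)
            ≤ ENNReal.ofReal (Real.exp (α * (n + 1)) - Real.exp (α * n)) *
              ENNReal.ofReal (ρ ^ n * E₀ / M) := mul_le_mul_right (hμA n) _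
          _ = ENNReal.ofReal ((Real.exp (α * (n + 1)) - Real.exp (α * n)) * (ρ ^ n * E₀ / M)) :=
              (ENNReal.ofReal_mul (hgnn n)).symm
          _ = ENNReal.ofReal ((Real.exp α - 1) * (E₀ / M) * r ^ n) := by
              congr 1
              have he1 : Real.exp (α * (n + 1)) = Real.exp (α * n) * Real.exp α := by
                rw [← Real.exp_add]; ring_nf
              have he2 : Real.exp (α * n) = (Real.exp α) ^ n := by
                rw [mul_comm, Real.exp_nat_mul]
              rw [he1, he2, hr_def, mul_pow]
              field_simp
    _ = 1 + ENNReal.ofReal ((Real.exp α - 1) * (E₀ / M) * (1 - r)⁻¹) := by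
        congr 1
        rw [← ENNReal.ofReal_tsum_of_nonneg
          (fun n => mul_nonneg (mul_nonneg (by linarith) (div_nonneg hE₀0 hM_pos.le))
            (pow_nonneg hr0 n))
          (((summable_geometric_of_lt_one hr0 hr1).mul_left _))]
        congr 1
        rw [tsum_mul_left, tsum_geometric_of_lt_one hr0 hr1]
    _ ≤ ENNReal.ofReal (c * (1 + E₀)) := by
        have h1r : 0 < 1 - r := by linarith
        have hKc : (Real.exp α - 1) / (M * (1 - r)) ≤ c := le_max_right _ _
        have heq : (Real.exp α - 1) * (E₀ / M) * (1 - r)⁻¹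
            = (Real.exp α - 1) / (M * (1 - r)) * E₀ := by
          field_simp
        have h2 : ENNReal.ofReal ((Real.exp α - 1) * (E₀ / M) * (1 - r)⁻¹)
            ≤ ENNReal.ofReal (c * E₀) := by
          rw [heq]
          exact ENNReal.ofReal_le_ofReal (mul_le_mul_of_nonneg_right hKc hE₀0)
        have h3 : (1 : ENNReal) ≤ ENNReal.ofReal c := by
          rw [← ENNReal.ofReal_one]
          exact ENNReal.ofReal_le_ofReal (le_max_left _ _)
        calc (1 : ENNReal) + ENNReal.ofReal ((Real.exp α - 1) * (E₀ / M) * (1 - r)⁻¹)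
            ≤ ENNReal.ofReal c + ENNReal.ofReal (c * E₀) := add_le_add h3 h2
          _ = ENNReal.ofReal (c + c * E₀) := (ENNReal.ofReal_add
              (le_trans zero_le_one (le_max_left _ _))
              (mul_nonneg (le_trans zero_le_one (le_max_left _ _)) hE₀0)).symm
          _ = ENNReal.ofReal (c * (1 + E₀)) := by ring_nf
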